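/- In any triangle with sides a, b, c, circumradius R, and inradius r, a² + b² + c² ≤ 18Rr + (a−b)² + (b−c)² + (c−a)². -/

import Mathlib

theorem reverse_18Rr (a b c : ℝ) (ha : 0 < a) (hb : 0 < b) (hc : 0 < c)
    (hA : a < b + c) (hB : b < c + a) (hC : c < a + b) (s S : ℝ) (hs : s = (a + b + c) / 2)
    (hS : S = Real.sqrt (s * (s - a) * (s - b) * (s - c))) (R : ℝ) (hR : R = a * b * c / (4 * S)) (r : ℝ) (hr : r = S / s) :
    a ^ 2 + b ^ 2 + c ^ 2 ≤ 18 * R * r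
      + (a - b) ^ 2 + (b - c) ^ 2 + (c - a) ^ 2 := by
  have hs0 : 0 < s := by rw [hs]; linarith
  have h1 : 0 < s - a := by rw [hs]; linarith
  have h2 : 0 < s - b := by rw [hs]; linarith
  have h3 : 0 < s - c := by rw [hs]; linarith
  have hprod : 0 < s * (s - a) * (s - b) * (s - c) := by positivity
  have hS0 : 0 < S := by rw [hS]; exact Real.sqrt_pos.2 hprod
  have hRr : R * r = a * b * c / (4 * s) := by
    rw [hR, hr]; field_simp
  rw [mul_assoc, hRr]
  have hABC : 0 < a + b + c := by linarith
  have he : (18:ℝ) * (a * b * c / (4 * s)) = 9 * a * b * c / (a + b + c) := by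
    rw [hs]; field_simp; ring
  have hschur : 0 < (b + c - a) * (c + a - b) * (a + b - c) :=
    mul_pos (mul_pos (by linarith) (by linarith)) (by linarith)
  have hD : 2 * (a * b + b * c + c * a) - (a ^ 2 + b ^ 2 + c ^ 2) ≤ 9 * a * b * c / (a + b + c) := by
    rw [le_div_iff₀ hABC]
    nlinarith [mul_nonneg (by linarith : (0:ℝ) ≤ b + c - a) (sq_nonneg (b - c)), mul_nonneg (by linarith : (0:ℝ) ≤ c + a - b) (sq_nonneg (c - a)), mul_nonneg (by linarith : (0:ℝ) ≤ a + b - c) (sq_nonneg (a - b))]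
  rw [he]; linarith
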